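/- (First-iterate estimate of Theorem 3.1 for the GBGS method.) Let x₀ ∈ R^n with Aᵀ(b − Ax₀) ≠ 0, let J₀ be the greedy index set determined by θ ∈ [0,1] and r₀ = b − Ax₀, and let x₁ = x₀ + I_{J₀} A_{J₀}† (b − Ax₀). Then ‖x₁ − x⋆‖²_{AᵀA} ≤ (1 − (‖A_{J₀}‖_F² / σ_max(A_{J₀})²) · σ_min(A)² / ‖A‖_F²) · ‖x₀ − x⋆‖²_{AᵀA}. -/

import Mathlib

noncomputable section
open Matrix

/-- Squared Euclidean norm `‖v‖₂²` of a vector. -/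
def norm2 {ι : Type*} [Fintype ι] (v : ι → ℝ) : ℝ := ∑ i, (v i) ^ 2

/-- Squared Frobenius norm `‖A‖_F²` of a matrix. -/
def frob2 {ι κ : Type*} [Fintype ι] [Fintype κ] (A : Matrix ι κ ℝ) : ℝ :=
  ∑ i, ∑ j, (A i j) ^ 2

theorem Matrix.isHermitian_transpose_mul_self {ι κ : Type*} [Fintype ι]
    (B : Matrix ι κ ℝ) : (Bᵀ * B).IsHermitian := by
  first
  | simpa using Matrix.isHermitian_conjTranspose_mul_self B
  | (unfold Matrix.IsHermitian; ext i j; simp [Matrix.mul_apply, mul_comm])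

/-- Squared largest singular value `σ_max(B)²`, i.e. the largest eigenvalue of `Bᵀ * B`. -/
def sigmaMaxSq {ι κ : Type*} [Fintype ι] [Fintype κ] [DecidableEq κ]
    (B : Matrix ι κ ℝ) : ℝ :=
  sSup (Set.range (Matrix.isHermitian_transpose_mul_self B).eigenvalues)

/-- Squared smallest singular value `σ_min(B)²`, i.e. the smallest eigenvalue of `Bᵀ * B`. -/
def sigmaMinSq {ι κ : Type*} [Fintype ι] [Fintype κ] [DecidableEq κ]
    (B : Matrix ι κ ℝ) : ℝ :=
  sInf (Set.range (Matrix.isHermitian_transpose_mul_self B).eigenvalues)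

/-- Squared Euclidean norm `‖A_(j)‖₂²` of the `j`-th column of `A`. -/
def col2 {m n : ℕ} (A : Matrix (Fin m) (Fin n) ℝ) (j : Fin n) : ℝ := ∑ i, (A i j) ^ 2

/-- `A` has full column rank: its columns are linearly independent. -/
def FullColRank {m n : ℕ} (A : Matrix (Fin m) (Fin n) ℝ) : Prop :=
  LinearIndependent ℝ fun j : Fin n => (fun i => A i j : Fin m → ℝ)

/-- `max_{1 ≤ j ≤ n} |A_(j)ᵀ r|² / ‖A_(j)‖₂²`. -/
def maxRatio {m n : ℕ} (A : Matrix (Fin m) (Fin n) ℝ) (r : Fin m → ℝ) : ℝ :=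
  ⨆ j : Fin n, ((Aᵀ *ᵥ r) j) ^ 2 / col2 A j

/-- The greedy parameter
`ε = (θ/‖Aᵀr‖₂²)·max_j |A_(j)ᵀ r|²/‖A_(j)‖₂² + (1−θ)/‖A‖_F²`. -/
def eps {m n : ℕ} (A : Matrix (Fin m) (Fin n) ℝ) (r : Fin m → ℝ) (θ : ℝ) : ℝ :=
  θ / norm2 (Aᵀ *ᵥ r) * maxRatio A r + (1 - θ) / frob2 A

open Classical in
/-- The greedy index set `J = { j : |A_(j)ᵀ r|² ≥ ε ‖Aᵀr‖₂² ‖A_(j)‖₂² }`. -/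
def greedySet {m n : ℕ} (A : Matrix (Fin m) (Fin n) ℝ) (r : Fin m → ℝ) (θ : ℝ) :
    Finset (Fin n) :=
  Finset.univ.filter fun j =>
    eps A r θ * norm2 (Aᵀ *ᵥ r) * col2 A j ≤ ((Aᵀ *ᵥ r) j) ^ 2

/-- The column submatrix `A_J` of `A`, with columns indexed by `J`. -/
def subCols {m n : ℕ} (A : Matrix (Fin m) (Fin n) ℝ) (J : Finset (Fin n)) :
    Matrix (Fin m) {j // j ∈ J} ℝ :=
  A.submatrix id fun j => (j : Fin n)

/-- The submatrix `I_J` of the `n × n` identity with columns indexed by `J`. -/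
def subId {n : ℕ} (J : Finset (Fin n)) : Matrix (Fin n) {j // j ∈ J} ℝ :=
  (1 : Matrix (Fin n) (Fin n) ℝ).submatrix id fun j => (j : Fin n)

/-- Moore–Penrose pseudoinverse of a full-column-rank matrix: `B† = (BᵀB)⁻¹Bᵀ`. -/
def pinv {ι κ : Type*} [Fintype ι] [Fintype κ] [DecidableEq κ] (B : Matrix ι κ ℝ) :
    Matrix κ ι ℝ :=
  (Bᵀ * B)⁻¹ * Bᵀ

/-- The matrix `Ã_J` whose columns are the normalized columns `A_(j)/‖A_(j)‖₂`, `j ∈ J`. -/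
def tildeA {m n : ℕ} (A : Matrix (Fin m) (Fin n) ℝ) (J : Finset (Fin n)) :
    Matrix (Fin m) {j // j ∈ J} ℝ :=
  Matrix.of fun i j => A i (j : Fin n) / Real.sqrt (col2 A (j : Fin n))

/-- The matrix `Ĩ_J` whose columns are `e_j/‖A_(j)‖₂`, `j ∈ J`. -/
def tildeI {m n : ℕ} (A : Matrix (Fin m) (Fin n) ℝ) (J : Finset (Fin n)) :
    Matrix (Fin n) {j // j ∈ J} ℝ :=
  Matrix.of fun i j => (if i = (j : Fin n) then 1 else 0) / Real.sqrt (col2 A (j : Fin n))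

section spec
variable {ι : Type*} [Fintype ι] [DecidableEq ι] {M : Matrix ι ι ℝ} (hM : M.IsHermitian)

lemma star_coe (U : Matrix ι ι ℝ) : star U = Uᵀ := rfl

lemma quad_eq (v : ι → ℝ) :
    v ⬝ᵥ (M *ᵥ v) = ∑ i, hM.eigenvalues i * (((hM.eigenvectorUnitary : Matrix ι ι ℝ)ᵀ *ᵥ v) i)^2 := by
  set U := (hM.eigenvectorUnitary : Matrix ι ι ℝ)
  have hspec : M = U * diagonal hM.eigenvalues * Uᵀ := by
    have := hM.spectral_theorem
    simpa [U, star_coe] using this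
  conv_lhs => rw [hspec]
  rw [← mulVec_mulVec, ← mulVec_mulVec, dotProduct_mulVec, ← mulVec_transpose]
  simp only [dotProduct, mulVec_diagonal]
  exact Finset.sum_congr rfl fun i _ => by ring

lemma norm2_eq (v : ι → ℝ) :
    norm2 v = ∑ i, (((hM.eigenvectorUnitary : Matrix ι ι ℝ)ᵀ *ᵥ v) i)^2 := by
  set U := (hM.eigenvectorUnitary : Matrix ι ι ℝ)
  have hU : U * Uᵀ = 1 := by
    have := (Matrix.mem_unitaryGroup_iff).mp hM.eigenvectorUnitary.2
    simpa [U, star_coe] using this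
  have : (∑ i, ((Uᵀ *ᵥ v) i)^2) = (Uᵀ *ᵥ v) ⬝ᵥ (Uᵀ *ᵥ v) := by
    simp [dotProduct, pow_two]
  rw [norm2, this, dotProduct_mulVec, ← mulVec_transpose, mulVec_mulVec, transpose_transpose,
    hU, one_mulVec]
  simp [dotProduct, pow_two]

lemma quad_sq_eq (v : ι → ℝ) :
    v ⬝ᵥ ((M * M) *ᵥ v) =
      ∑ i, (hM.eigenvalues i)^2 * (((hM.eigenvectorUnitary : Matrix ι ι ℝ)ᵀ *ᵥ v) i)^2 := by
  set U := (hM.eigenvectorUnitary : Matrix ι ι ℝ)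
  have hspec : M = U * diagonal hM.eigenvalues * Uᵀ := by
    simpa [U, star_coe] using hM.spectral_theorem
  have hU : Uᵀ * U = 1 := by
    have := (Matrix.mem_unitaryGroup_iff').mp hM.eigenvectorUnitary.2
    simpa [U, star_coe] using this
  have hMM : M * M = U * diagonal (fun i => (hM.eigenvalues i)^2) * Uᵀ := by
    calc M * M = U * diagonal hM.eigenvalues * (Uᵀ * U) * diagonal hM.eigenvalues * Uᵀ := by
          conv_lhs => rw [hspec]
          simp only [Matrix.mul_assoc]
      _ = U * diagonal hM.eigenvalues * diagonal hM.eigenvalues * Uᵀ := by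
          rw [hU, Matrix.mul_one]
      _ = U * diagonal (fun i => (hM.eigenvalues i)^2) * Uᵀ := by
          rw [Matrix.mul_assoc U, diagonal_mul_diagonal]
          congr 2; funext i; ring
  rw [hMM, ← mulVec_mulVec, ← mulVec_mulVec, dotProduct_mulVec, ← mulVec_transpose]
  simp only [dotProduct, mulVec_diagonal]
  exact Finset.sum_congr rfl fun i _ => by ring

lemma quad_sq_ge [Nonempty ι] (hpsd : M.PosSemidef) (v : ι → ℝ) :
    sInf (Set.range hM.eigenvalues) * (v ⬝ᵥ (M *ᵥ v)) ≤ v ⬝ᵥ ((M * M) *ᵥ v) := by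
  rw [quad_eq hM, quad_sq_eq hM, Finset.mul_sum]
  refine Finset.sum_le_sum fun i _ => ?_
  have h1 : sInf (Set.range hM.eigenvalues) ≤ hM.eigenvalues i :=
    csInf_le (Set.finite_range _).bddBelow ⟨i, rfl⟩
  have h2 : 0 ≤ hM.eigenvalues i := hpsd.eigenvalues_nonneg i
  nlinarith [mul_nonneg (sub_nonneg.2 h1)
    (mul_nonneg h2 (sq_nonneg (((hM.eigenvectorUnitary : Matrix ι ι ℝ)ᵀ *ᵥ v) i)))]

lemma quad_sq_le [Nonempty ι] (hpsd : M.PosSemidef) (v : ι → ℝ) :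
    v ⬝ᵥ ((M * M) *ᵥ v) ≤ sSup (Set.range hM.eigenvalues) * (v ⬝ᵥ (M *ᵥ v)) := by
  rw [quad_eq hM, quad_sq_eq hM, Finset.mul_sum]
  refine Finset.sum_le_sum fun i _ => ?_
  have h1 : hM.eigenvalues i ≤ sSup (Set.range hM.eigenvalues) :=
    le_csSup (Set.finite_range _).bddAbove ⟨i, rfl⟩
  have h2 : 0 ≤ hM.eigenvalues i := hpsd.eigenvalues_nonneg i
  nlinarith [mul_nonneg (sub_nonneg.2 h1)
    (mul_nonneg h2 (sq_nonneg (((hM.eigenvectorUnitary : Matrix ι ι ℝ)ᵀ *ᵥ v) i)))]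

end spec

lemma norm2_nonneg' {ι : Type*} [Fintype ι] (v : ι → ℝ) : 0 ≤ norm2 v :=
  Finset.sum_nonneg fun _ _ => sq_nonneg _

lemma norm2_pos' {ι : Type*} [Fintype ι] {v : ι → ℝ} (hv : v ≠ 0) : 0 < norm2 v := by
  obtain ⟨i, hi⟩ := Function.ne_iff.mp hv
  have h1 : (0:ℝ) < (v i)^2 := sq_pos_of_ne_zero hi
  exact lt_of_lt_of_le h1 (Finset.single_le_sum (fun j _ => sq_nonneg (v j)) (Finset.mem_univ i))

lemma dot_self_eq {ι : Type*} [Fintype ι] (v : ι → ℝ) : v ⬝ᵥ v = norm2 v := by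
  simp [norm2, dotProduct, pow_two]

lemma norm2_add' {ι : Type*} [Fintype ι] (x y : ι → ℝ) :
    norm2 (x + y) = norm2 x + 2*(x ⬝ᵥ y) + norm2 y := by
  simp only [norm2, dotProduct, Pi.add_apply, Finset.mul_sum, ← Finset.sum_add_distrib]
  exact Finset.sum_congr rfl fun i _ => by ring

lemma norm2_neg' {ι : Type*} [Fintype ι] (x : ι → ℝ) : norm2 (-x) = norm2 x := by
  simp [norm2]

lemma norm2_mulVec_eq {ι κ : Type*} [Fintype ι] [Fintype κ] (A : Matrix ι κ ℝ) (u : κ → ℝ) :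
    norm2 (A *ᵥ u) = u ⬝ᵥ ((Aᵀ * A) *ᵥ u) := by
  rw [← dot_self_eq, ← mulVec_mulVec]
  conv_rhs => rw [dotProduct_mulVec u Aᵀ (A *ᵥ u), vecMul_transpose]

lemma norm2_mulVec_symm {κ : Type*} [Fintype κ] {M : Matrix κ κ ℝ} (hM : Mᵀ = M) (u : κ → ℝ) :
    norm2 (M *ᵥ u) = u ⬝ᵥ ((M * M) *ᵥ u) := by
  rw [← dot_self_eq, ← mulVec_mulVec]
  conv_rhs => rw [dotProduct_mulVec u M (M *ᵥ u), ← hM, vecMul_transpose]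
  rw [hM]

set_option maxHeartbeats 2000000 in
/-- first-iterate estimate (4) of Theorem 3.1, GBGS method:
`‖x₁ − x⋆‖²_{AᵀA} ≤ (1 − (‖A_{J₀}‖_F²/σ_max(A_{J₀})²) σ_min(A)²/‖A‖_F²) ‖x₀ − x⋆‖²_{AᵀA}`. -/
theorem stmt7 {m n : ℕ} (A : Matrix (Fin m) (Fin n) ℝ) (hA : FullColRank A)
    (b : Fin m → ℝ) (xstar : Fin n → ℝ) (hstar : (Aᵀ * A) *ᵥ xstar = Aᵀ *ᵥ b)
    (θ : ℝ) (hθ : θ ∈ Set.Icc (0 : ℝ) 1) (x0 : Fin n → ℝ)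
    (r0 : Fin m → ℝ) (hr : r0 = b - A *ᵥ x0) (hr0 : Aᵀ *ᵥ r0 ≠ 0)
    (J0 : Finset (Fin n)) (hJ0 : J0 = greedySet A r0 θ) (x1 : Fin n → ℝ)
    (hx1 : x1 = x0 + subId J0 *ᵥ (pinv (subCols A J0) *ᵥ (b - A *ᵥ x0))) :
    norm2 (A *ᵥ (x1 - xstar)) ≤
      (1 - frob2 (subCols A J0) / sigmaMaxSq (subCols A J0) *
          (sigmaMinSq A / frob2 A)) *
        norm2 (A *ᵥ (x0 - xstar)) := by
  classical
  obtain ⟨hθ0, hθ1⟩ := hθ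
  have hN0 : Nonempty (Fin n) := by
    by_contra h
    exact hr0 (funext fun j => ((h ⟨j⟩)).elim)
  set g : Fin n → ℝ := Aᵀ *ᵥ r0 with hgdef
  set u : Fin n → ℝ := x0 - xstar with hudef
  -- relation between g and u
  have hgu : g = -((Aᵀ * A) *ᵥ u) := by
    rw [hgdef, hr, hudef, Matrix.mulVec_sub, Matrix.mulVec_sub, ← Matrix.mulVec_mulVec,
      ← Matrix.mulVec_mulVec, ← hstar, neg_sub]
    simp [Matrix.mulVec_mulVec]
  have hMu : (Aᵀ * A) *ᵥ u = -g := by rw [hgu, neg_neg]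
  -- columns are nonzero
  have hcol : ∀ j, 0 < col2 A j := fun j => norm2_pos' (hA.ne_zero j)
  have hfrobA : frob2 A = ∑ j, col2 A j := by
    rw [frob2, Finset.sum_comm]; rfl
  have hfrobApos : 0 < frob2 A := by
    rw [hfrobA]; exact Finset.sum_pos (fun j _ => hcol j) Finset.univ_nonempty
  have hgpos : 0 < norm2 g := norm2_pos' hr0
  -- maxRatio bounds
  have hmaxR : ∀ j, g j ^ 2 ≤ maxRatio A r0 * col2 A j := by
    intro j
    have h1 : g j ^ 2 / col2 A j ≤ maxRatio A r0 :=
      le_ciSup (f := fun j => ((Aᵀ *ᵥ r0) j) ^ 2 / col2 A j) (Set.finite_range _).bddAbove j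
    calc g j ^ 2 = (g j ^ 2 / col2 A j) * col2 A j :=
          (div_mul_cancel₀ _ (hcol j).ne').symm
      _ ≤ maxRatio A r0 * col2 A j := mul_le_mul_of_nonneg_right h1 (hcol j).le
  have hsum : norm2 g ≤ maxRatio A r0 * frob2 A := by
    rw [hfrobA, Finset.mul_sum, norm2]
    exact Finset.sum_le_sum fun j _ => hmaxR j
  have hq : norm2 g / frob2 A ≤ maxRatio A r0 := (div_le_iff₀ hfrobApos).2 hsum
  -- the key formula for eps * norm2 g
  have he : eps A r0 θ * norm2 g = θ * maxRatio A r0 + (1-θ) * (norm2 g / frob2 A) := by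
    simp only [eps, ← hgdef]
    field_simp
  have hepsg : norm2 g / frob2 A ≤ eps A r0 θ * norm2 g := by
    rw [he]
    nlinarith [mul_le_mul_of_nonneg_left hq hθ0]
  -- membership in the greedy set
  have hmem : ∀ j ∈ J0, eps A r0 θ * norm2 g * col2 A j ≤ g j ^ 2 := by
    intro j hj
    rw [hJ0, greedySet, Finset.mem_filter] at hj
    exact hj.2
  -- J0 is nonempty
  have hJ0ne : J0.Nonempty := by
    obtain ⟨j0, hj0⟩ := Finite.exists_max (fun j => g j ^ 2 / col2 A j)
    refine ⟨j0, ?_⟩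
    rw [hJ0, greedySet, Finset.mem_filter]
    refine ⟨Finset.mem_univ _, ?_⟩
    have hmr : maxRatio A r0 ≤ g j0 ^ 2 / col2 A j0 :=
      ciSup_le (fun j => hj0 j)
    have h2 : eps A r0 θ * norm2 g ≤ g j0 ^ 2 / col2 A j0 := by
      rw [he]
      nlinarith [hq.trans hmr]
    calc eps A r0 θ * norm2 (Aᵀ *ᵥ r0) * col2 A j0
        ≤ (g j0 ^ 2 / col2 A j0) * col2 A j0 :=
          mul_le_mul_of_nonneg_right h2 (hcol j0).le
      _ = g j0 ^ 2 := div_mul_cancel₀ _ (hcol j0).ne'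
  have hJty : Nonempty {j // j ∈ J0} := ⟨⟨hJ0ne.choose, hJ0ne.choose_spec⟩⟩
  set B : Matrix (Fin m) {j // j ∈ J0} ℝ := subCols A J0 with hBdef
  set N : Matrix {j // j ∈ J0} {j // j ∈ J0} ℝ := Bᵀ * B with hNdef
  have hNherm : N.IsHermitian := isHermitian_transpose_mul_self B
  have hNT : Nᵀ = N := hNherm
  have hNpsd : N.PosSemidef := by
    have := posSemidef_conjTranspose_mul_self B
    rwa [conjTranspose_eq_transpose_of_trivial] at this
  -- columns of B are linearly independent
  have hBli : LinearIndependent ℝ (fun j : {j // j ∈ J0} => (fun i => B i j : Fin m → ℝ)) :=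
    hA.comp (fun j : {j // j ∈ J0} => (j : Fin n)) Subtype.coe_injective
  have hBinj : ∀ v : {j // j ∈ J0} → ℝ, B *ᵥ v = 0 → v = 0 := by
    intro v hv
    have h2 : ∑ j, v j • (fun i => B i j : Fin m → ℝ) = 0 := by
      funext i
      rw [Finset.sum_apply]
      simpa [mulVec, dotProduct, mul_comm] using congrFun hv i
    exact funext (Fintype.linearIndependent_iff.mp hBli v h2)
  have hNpd : N.PosDef := by
    refine Matrix.PosDef.of_dotProduct_mulVec_pos hNherm fun x hx => ?_
    have h1 : x ⬝ᵥ (N *ᵥ x) = norm2 (B *ᵥ x) := (norm2_mulVec_eq B x).symm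
    have h2 : B *ᵥ x ≠ 0 := fun hc => hx (hBinj x hc)
    simpa [h1, star_trivial] using norm2_pos' h2
  haveI : Invertible N := hNpd.isUnit.invertible
  have hNinv : N * N⁻¹ = 1 := mul_inv_of_invertible N
  set s : {j // j ∈ J0} → ℝ := Bᵀ *ᵥ r0 with hsdef
  set w : {j // j ∈ J0} → ℝ := N⁻¹ *ᵥ s with hwdef
  have hNw : N *ᵥ w = s := by
    rw [hwdef, mulVec_mulVec, hNinv, one_mulVec]
  have hsg : ∀ j : {j // j ∈ J0}, s j = g (j : Fin n) := fun j => rfl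
  -- x1 - xstar
  have hAId : A * subId J0 = B := by
    ext i j
    simp only [subId, subCols, Matrix.mul_apply, Matrix.one_apply, Matrix.submatrix_apply, id]
    simp only [mul_ite, mul_one, mul_zero, Finset.sum_ite_eq', Finset.mem_univ, if_true]
    rfl
  have hx1w : x1 - xstar = u + subId J0 *ᵥ w := by
    rw [hx1, ← hr]
    have hp : pinv B *ᵥ r0 = w := by
      rw [pinv, ← mulVec_mulVec, hwdef, hsdef]
    rw [hp, hudef, add_sub_right_comm]
  have hAx1 : A *ᵥ (x1 - xstar) = A *ᵥ u + B *ᵥ w := by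
    rw [hx1w, Matrix.mulVec_add, mulVec_mulVec, hAId]
  -- Bᵀ (A u) = -s
  have hBtAu : Bᵀ *ᵥ (A *ᵥ u) = -s := by
    funext j
    have h1 : (Bᵀ *ᵥ (A *ᵥ u)) j = ((Aᵀ * A) *ᵥ u) (j : Fin n) := by
      rw [← Matrix.mulVec_mulVec]; rfl
    rw [h1, hMu]
    simp [hsg j]
  have hdot : (A *ᵥ u) ⬝ᵥ (B *ᵥ w) = -(s ⬝ᵥ w) := by
    rw [dotProduct_mulVec, ← mulVec_transpose, hBtAu, neg_dotProduct]
  have hBw2 : norm2 (B *ᵥ w) = s ⬝ᵥ w := by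
    rw [← dot_self_eq, dotProduct_mulVec, ← mulVec_transpose, mulVec_mulVec, ← hNdef, hNw]
  have hkey : norm2 (A *ᵥ (x1 - xstar)) = norm2 (A *ᵥ u) - s ⬝ᵥ w := by
    rw [hAx1, norm2_add', hdot, hBw2]; ring
  -- spectral bounds
  have hswN : s ⬝ᵥ w = w ⬝ᵥ (N *ᵥ w) := by rw [← hNw, dotProduct_comm]
  have hns : norm2 s = w ⬝ᵥ ((N * N) *ᵥ w) := by
    rw [← hNw, norm2_mulVec_symm hNT]
  have hsw_ub : norm2 s ≤ sigmaMaxSq B * (s ⬝ᵥ w) := by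
    rw [hns, hswN]
    exact quad_sq_le (isHermitian_transpose_mul_self B) hNpsd w
  have hmaxpos : 0 < sigmaMaxSq B := by
    obtain ⟨j⟩ := hJty
    have h1 : 0 < (isHermitian_transpose_mul_self B).eigenvalues j := hNpd.eigenvalues_pos j
    have h2 : (isHermitian_transpose_mul_self B).eigenvalues j ≤ sigmaMaxSq B :=
      le_csSup (Set.finite_range _).bddAbove ⟨j, rfl⟩
    exact h1.trans_le h2
  have hfrobB : frob2 B = ∑ j : {j // j ∈ J0}, col2 A (j : Fin n) := by
    rw [frob2, Finset.sum_comm]; rfl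
  have hfrobBnn : 0 ≤ frob2 B :=
    Finset.sum_nonneg fun i _ => Finset.sum_nonneg fun j _ => sq_nonneg _
  have hs_lb : eps A r0 θ * norm2 g * frob2 B ≤ norm2 s := by
    rw [hfrobB, Finset.mul_sum, norm2]
    refine Finset.sum_le_sum fun j _ => ?_
    have h3 := hmem (j : Fin n) j.2
    rw [hsg j]
    exact h3
  have hherm : (Aᵀ * A).IsHermitian := isHermitian_transpose_mul_self A
  have hpsd : (Aᵀ * A).PosSemidef := by
    have := posSemidef_conjTranspose_mul_self A
    rwa [conjTranspose_eq_transpose_of_trivial] at this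
  have hg_lb : sigmaMinSq A * norm2 (A *ᵥ u) ≤ norm2 g := by
    have hT : (Aᵀ * A)ᵀ = Aᵀ * A := hherm
    have h1 : norm2 g = u ⬝ᵥ (((Aᵀ * A) * (Aᵀ * A)) *ᵥ u) := by
      rw [hgu, norm2_neg', norm2_mulVec_symm hT]
    rw [h1, norm2_mulVec_eq A u]
    exact quad_sq_ge (isHermitian_transpose_mul_self A) hpsd u
  have hminnn : 0 ≤ sigmaMinSq A := by
    unfold sigmaMinSq
    refine le_csInf (Set.range_nonempty _) ?_
    rintro c ⟨i, rfl⟩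
    exact hpsd.eigenvalues_nonneg i
  have hgF : norm2 g ≤ frob2 A * (eps A r0 θ * norm2 g) := by
    rw [← div_le_iff₀' hfrobApos]
    exact hepsg
  rw [hkey]
  have hC : frob2 B / sigmaMaxSq B * (sigmaMinSq A / frob2 A) * norm2 (A *ᵥ u) ≤ s ⬝ᵥ w := by
    rw [div_mul_div_comm, div_mul_eq_mul_div,
      div_le_iff₀ (by positivity : (0:ℝ) < sigmaMaxSq B * frob2 A)]
    nlinarith [mul_le_mul_of_nonneg_left hg_lb hfrobBnn,
      mul_le_mul_of_nonneg_left hgF hfrobBnn,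
      mul_le_mul_of_nonneg_left hs_lb hfrobApos.le,
      mul_le_mul_of_nonneg_left hsw_ub hfrobApos.le,
      norm2_nonneg' (A *ᵥ u)]
  nlinarith [hC]
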